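/- Let n ≥ 1 be an integer, let k be an even integer, and let r be any integer. Then 2·∑_{j=0}^{n} j·C(n,j)·L(r + 2kj) = 5n·L(k)^{n−1}·F(r + nk)·F(k) + n·L(k)^n·L(r + nk), and 2·∑_{j=0}^{n} j·C(n,j)·F(r + 2kj) = n·L(k)^{n−1}·L(r + nk)·F(k) + n·L(k)^n·F(r + nk), where C(n,j) denotes the binomial coefficient. -/

import Mathlib

open Finset

private lemma int_two_step (P : ℤ → Prop) (h0 : P 0) (h1 : P 1)
    (up : ∀ n : ℤ, P n → P (n + 1) → P (n + 2))
    (down : ∀ n : ℤ, P n → P (n + 1) → P (n - 1)) : ∀ n : ℤ, P n := by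
  have key : ∀ n : ℤ, P n ∧ P (n + 1) := by
    intro n
    induction n using Int.induction_on with
    | zero => exact ⟨h0, h1⟩
    | succ i ih =>
        refine ⟨ih.2, ?_⟩
        have h := up i ih.1 ih.2
        have e : (i : ℤ) + 1 + 1 = i + 2 := by ring
        rwa [e]
    | pred i ih =>
        refine ⟨down (-i) ih.1 ih.2, ?_⟩
        have e : (-(i : ℤ) - 1) + 1 = -i := by ring
        rw [e]; exact ih.1
  exact fun n => (key n).1

/-- flexible two-step recurrence: `F y + F w = 3 F x` whenever `y = x+2`, `w = x-2`. -/
private lemma step2 (F : ℤ → ℤ) (hF : ∀ n : ℤ, F n = F (n - 1) + F (n - 2))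
    (x y w : ℤ) (hy : y = x + 2) (hw : w = x - 2) : F y + F w = 3 * F x := by
  subst hy hw
  have h1 := hF (x + 2)
  have h2 := hF (x + 1)
  have h3 := hF x
  rw [show x + 2 - 1 = x + 1 by ring, show x + 2 - 2 = x by ring] at h1
  rw [show x + 1 - 1 = x by ring, show x + 1 - 2 = x - 1 by ring] at h2
  linarith

/-- flexible one-step recurrence. -/
private lemma step1 (F : ℤ → ℤ) (hF : ∀ n : ℤ, F n = F (n - 1) + F (n - 2))
    (x y w : ℤ) (hy : y = x + 1) (hw : w = x - 1) : F y = F x + F w := by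
  subst hy hw
  have h1 := hF (x + 1)
  rw [show x + 1 - 1 = x by ring, show x + 1 - 2 = x - 1 by ring] at h1
  exact h1

private lemma lemFL (F L : ℤ → ℤ)
    (hF0 : F 0 = 0) (hF1 : F 1 = 1) (hF : ∀ n : ℤ, F n = F (n - 1) + F (n - 2))
    (hL0 : L 0 = 2) (hL1 : L 1 = 1) (hL : ∀ n : ℤ, L n = L (n - 1) + L (n - 2)) :
    ∀ a : ℤ, F (a + 1) + F (a - 1) = L a ∧ L (a + 1) + L (a - 1) = 5 * F a := by
  apply int_two_step
  · -- a = 0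
    have h1 : F 1 = F 0 + F (-1) := step1 F hF 0 1 (-1) (by ring) (by ring)
    have h2 : L 1 = L 0 + L (-1) := step1 L hL 0 1 (-1) (by ring) (by ring)
    norm_num
    constructor <;> linarith
  · -- a = 1
    have h1 : F 2 = F 1 + F 0 := step1 F hF 1 2 0 (by ring) (by ring)
    have h2 : L 2 = L 1 + L 0 := step1 L hL 1 2 0 (by ring) (by ring)
    norm_num
    constructor <;> linarith
  · -- up
    intro n ⟨ih0F, ih0L⟩ ⟨ih1F, ih1L⟩
    have e1 : F (n + 2 + 1) = F (n + 1 + 1) + F (n + 1) := step1 F hF (n+1+1) _ _ (by ring) (by ring)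
    have e2 : F (n + 2 - 1) = F (n + 1) := congrArg F (by ring)
    have e3 : L (n + 2) = L (n + 1) + L n := step1 L hL (n+1) _ _ (by ring) (by ring)
    have e4 : L (n + 2 + 1) = L (n + 1 + 1) + L (n + 1) := step1 L hL (n+1+1) _ _ (by ring) (by ring)
    have e5 : L (n + 2 - 1) = L (n + 1) := congrArg L (by ring)
    have e6 : F (n + 2) = F (n + 1) + F n := step1 F hF (n+1) _ _ (by ring) (by ring)
    have e7 : F (n + 1 - 1) = F n := congrArg F (by ring)
    have e8 : L (n + 1 - 1) = L n := congrArg L (by ring)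
    have e9 : F (n + 1 + 1) = F (n + 2) := congrArg F (by ring)
    have e10 : L (n + 1 + 1) = L (n + 2) := congrArg L (by ring)
    have e11 : F (n + 1) = F n + F (n - 1) := step1 F hF n _ _ (by ring) (by ring)
    have e12 : L (n + 1) = L n + L (n - 1) := step1 L hL n _ _ (by ring) (by ring)
    constructor <;> linarith
  · -- down
    intro n ⟨ih0F, ih0L⟩ ⟨ih1F, ih1L⟩
    have e1 : F (n + 1) = F n + F (n - 1) := step1 F hF n _ _ (by ring) (by ring)
    have e2 : F n = F (n - 1) + F (n - 1 - 1) := step1 F hF (n-1) _ _ (by ring) (by ring)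
    have e3 : L (n + 1) = L n + L (n - 1) := step1 L hL n _ _ (by ring) (by ring)
    have e4 : L n = L (n - 1) + L (n - 1 - 1) := step1 L hL (n-1) _ _ (by ring) (by ring)
    have e5 : F (n - 1 + 1) = F n := congrArg F (by ring)
    have e6 : L (n - 1 + 1) = L n := congrArg L (by ring)
    have e7 : F (n + 1 - 1) = F n := congrArg F (by ring)
    have e8 : L (n + 1 - 1) = L n := congrArg L (by ring)
    have e9 : F (n + 1 + 1) = F (n + 1) + F n := step1 F hF (n+1) _ _ (by ring) (by ring)
    have e10 : L (n + 1 + 1) = L (n + 1) + L n := step1 L hL (n+1) _ _ (by ring) (by ring)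
    constructor <;> linarith

private lemma evenshift (F L : ℤ → ℤ)
    (hF0 : F 0 = 0) (hF1 : F 1 = 1) (hF : ∀ n : ℤ, F n = F (n - 1) + F (n - 2))
    (hL0 : L 0 = 2) (hL1 : L 1 = 1) (hL : ∀ n : ℤ, L n = L (n - 1) + L (n - 2)) :
    ∀ t : ℤ, ∀ a : ℤ,
      (F (a + 2*t) + F (a - 2*t) = F a * L (2*t)) ∧
      (L (a + 2*t) + L (a - 2*t) = L a * L (2*t)) ∧
      (F (a + 2*t) - F (a - 2*t) = L a * F (2*t)) ∧
      (L (a + 2*t) - L (a - 2*t) = 5 * F a * F (2*t)) := by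
  apply int_two_step
  · -- t = 0
    intro a
    norm_num [hF0, hL0]
    constructor <;> ring
  · -- t = 1
    intro a
    have hFL1 := (lemFL F L hF0 hF1 hF hL0 hL1 hL a).1
    have hFL2 := (lemFL F L hF0 hF1 hF hL0 hL1 hL a).2
    have hF2 : F 2 = 1 := by
      have := step1 F hF 1 2 0 (by ring) (by ring); rw [hF0, hF1] at this; linarith
    have hL2 : L 2 = 3 := by
      have := step1 L hL 1 2 0 (by ring) (by ring); rw [hL0, hL1] at this; linarith
    have e1 : F (a + 2*1) + F (a - 2*1) = 3 * F a := step2 F hF a _ _ (by ring) (by ring)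
    have e2 : L (a + 2*1) + L (a - 2*1) = 3 * L a := step2 L hL a _ _ (by ring) (by ring)
    have e3 : F (a + 2*1) = F (a + 1) + F a := step1 F hF (a+1) _ _ (by ring) (by ring)
    have e4 : F a = F (a - 1) + F (a - 2*1) := step1 F hF (a-1) _ _ (by ring) (by ring)
    have e5 : L (a + 2*1) = L (a + 1) + L a := step1 L hL (a+1) _ _ (by ring) (by ring)
    have e6 : L a = L (a - 1) + L (a - 2*1) := step1 L hL (a-1) _ _ (by ring) (by ring)
    have hF2' : F (2*1) = 1 := by rw [show (2:ℤ)*1 = 2 by norm_num]; exact hF2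
    have hL2' : L (2*1) = 3 := by rw [show (2:ℤ)*1 = 2 by norm_num]; exact hL2
    refine ⟨?_, ?_, ?_, ?_⟩
    · rw [hL2']; linarith
    · rw [hL2']; linarith
    · rw [hF2']; linarith
    · rw [hF2']; linarith
  · -- up step
    intro t iht iht1
    intro a
    obtain ⟨i0F, i0L, i0Fm, i0Lm⟩ := iht a
    obtain ⟨i1F, i1L, i1Fm, i1Lm⟩ := iht1 a
    have e1 : F (a + 2*(t+2)) + F (a + 2*t) = 3 * F (a + 2*(t+1)) :=
      step2 F hF (a + 2*(t+1)) _ _ (by ring) (by ring)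
    have e2 : F (a - 2*t) + F (a - 2*(t+2)) = 3 * F (a - 2*(t+1)) :=
      step2 F hF (a - 2*(t+1)) _ _ (by ring) (by ring)
    have e1L : L (a + 2*(t+2)) + L (a + 2*t) = 3 * L (a + 2*(t+1)) :=
      step2 L hL (a + 2*(t+1)) _ _ (by ring) (by ring)
    have e2L : L (a - 2*t) + L (a - 2*(t+2)) = 3 * L (a - 2*(t+1)) :=
      step2 L hL (a - 2*(t+1)) _ _ (by ring) (by ring)
    have e3 : L (2*(t+2)) + L (2*t) = 3 * L (2*(t+1)) :=
      step2 L hL (2*(t+1)) _ _ (by ring) (by ring)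
    have e3F : F (2*(t+2)) + F (2*t) = 3 * F (2*(t+1)) :=
      step2 F hF (2*(t+1)) _ _ (by ring) (by ring)
    refine ⟨?_, ?_, ?_, ?_⟩
    · linear_combination e1 + e2 + 3*i1F - i0F - F a * e3
    · linear_combination e1L + e2L + 3*i1L - i0L - L a * e3
    · linear_combination e1 - e2 + 3*i1Fm - i0Fm - L a * e3F
    · linear_combination e1L - e2L + 3*i1Lm - i0Lm - 5 * F a * e3F
  · -- down step
    intro t iht iht1
    intro a
    obtain ⟨i0F, i0L, i0Fm, i0Lm⟩ := iht a
    obtain ⟨i1F, i1L, i1Fm, i1Lm⟩ := iht1 a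
    have e1 : F (a + 2*(t+1)) + F (a + 2*(t-1)) = 3 * F (a + 2*t) :=
      step2 F hF (a + 2*t) _ _ (by ring) (by ring)
    have e2 : F (a - 2*(t-1)) + F (a - 2*(t+1)) = 3 * F (a - 2*t) :=
      step2 F hF (a - 2*t) _ _ (by ring) (by ring)
    have e1L : L (a + 2*(t+1)) + L (a + 2*(t-1)) = 3 * L (a + 2*t) :=
      step2 L hL (a + 2*t) _ _ (by ring) (by ring)
    have e2L : L (a - 2*(t-1)) + L (a - 2*(t+1)) = 3 * L (a - 2*t) :=
      step2 L hL (a - 2*t) _ _ (by ring) (by ring)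
    have e3 : L (2*(t+1)) + L (2*(t-1)) = 3 * L (2*t) :=
      step2 L hL (2*t) _ _ (by ring) (by ring)
    have e3F : F (2*(t+1)) + F (2*(t-1)) = 3 * F (2*t) :=
      step2 F hF (2*t) _ _ (by ring) (by ring)
    refine ⟨?_, ?_, ?_, ?_⟩
    · linear_combination e1 + e2 - i1F + 3*i0F - F a * e3
    · linear_combination e1L + e2L - i1L + 3*i0L - L a * e3
    · linear_combination e1 - e2 - i1Fm + 3*i0Fm - L a * e3F
    · linear_combination e1L - e2L - i1Lm + 3*i0Lm - 5 * F a * e3F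

/-- binomial sum lemma for any sequence `g` with `g(a+k)+g(a-k) = Lk * g a`. -/
private lemma sumlem (g : ℤ → ℤ) (Lk k : ℤ)
    (hg : ∀ a : ℤ, g (a + k) + g (a - k) = Lk * g a) :
    ∀ m : ℕ, ∀ r : ℤ,
      ∑ j ∈ Finset.range (m+1), (m.choose j : ℤ) * g (r + 2*k*j) = Lk ^ m * g (r + m*k) := by
  intro m
  induction m with
  | zero => intro r; simp
  | succ m ih =>
      intro r
      have pascal : ∑ j ∈ Finset.range (m+1+1), ((m+1).choose j : ℤ) * g (r + 2*k*j)
          = (∑ j ∈ Finset.range (m+1), (m.choose j : ℤ) * g (r + 2*k*j))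
            + ∑ j ∈ Finset.range (m+1), (m.choose j : ℤ) * g ((r+2*k) + 2*k*j) := by
        rw [Finset.sum_range_succ' (fun j => ((m+1).choose j : ℤ) * g (r + 2*k*j)) (m+1)]
        have expand : ∀ i ∈ Finset.range (m+1),
            (((m+1).choose (i+1) : ℤ)) * g (r + 2*k*(i+1 : ℕ))
            = (m.choose i : ℤ) * g ((r+2*k) + 2*k*i)
              + (m.choose (i+1) : ℤ) * g (r + 2*k*(i+1 : ℕ)) := by
          intro i _
          rw [Nat.choose_succ_succ]
          push_cast
          rw [show r + 2*k*((i:ℤ)+1) = (r+2*k) + 2*k*i by ring]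
          ring
        rw [Finset.sum_congr rfl expand, Finset.sum_add_distrib]
        have tail : (∑ i ∈ Finset.range (m+1), (m.choose (i+1) : ℤ) * g (r + 2*k*(i+1 : ℕ)))
            + ((m+1).choose 0 : ℤ) * g (r + 2*k*(0:ℕ))
            = ∑ j ∈ Finset.range (m+1), (m.choose j : ℤ) * g (r + 2*k*j) := by
          have h1 := Finset.sum_range_succ' (fun j => (m.choose j : ℤ) * g (r + 2*k*j)) (m+1)
          have h2 := Finset.sum_range_succ (fun j => (m.choose j : ℤ) * g (r + 2*k*j)) (m+1)
          simp only [Nat.choose_succ_self, Nat.cast_zero, zero_mul, add_zero,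
            Nat.choose_zero_right, Nat.cast_one] at h1 h2 ⊢
          linarith [h1, h2]
        linarith [tail]
      rw [pascal, ih r, ih (r + 2*k)]
      have key := hg (r + (m+1 : ℕ)*k)
      have a1 : (r + (m+1 : ℕ)*k) - k = r + (m:ℕ)*k := by push_cast; ring
      have a2 : (r + (m+1 : ℕ)*k) + k = (r + 2*k) + (m:ℕ)*k := by push_cast; ring
      rw [a1, a2] at key
      push_cast
      push_cast at key
      linear_combination (Lk ^ m) * key + (g (r + 2 * k + m * k) + g (r + m*k)) * (pow_succ Lk m)

private lemma wsum (g : ℤ → ℤ) (Lk k : ℤ)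
    (hg : ∀ a : ℤ, g (a + k) + g (a - k) = Lk * g a) (m : ℕ) (r : ℤ) :
    ∑ j ∈ Finset.range (m+1+1), (j : ℤ) * (((m+1).choose j : ℕ) : ℤ) * g (r + 2*k*j)
      = ((m : ℤ) + 1) * Lk ^ m * g ((r + 2*k) + m*k) := by
  rw [Finset.sum_range_succ'
    (fun j => (j : ℤ) * (((m+1).choose j : ℕ) : ℤ) * g (r + 2*k*j)) (m+1)]
  have expand : ∀ i ∈ Finset.range (m+1),
      ((i+1 : ℕ) : ℤ) * (((m+1).choose (i+1) : ℕ) : ℤ) * g (r + 2*k*((i+1 : ℕ) : ℤ))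
      = ((m : ℤ) + 1) * ((m.choose i : ℤ) * g ((r + 2*k) + 2*k*i)) := by
    intro i _
    have hc : ((m : ℤ) + 1) * (m.choose i : ℤ) = (((m+1).choose (i+1) : ℕ) : ℤ) * ((i : ℤ) + 1) := by
      exact_mod_cast Nat.add_one_mul_choose_eq m i
    push_cast
    rw [show r + 2*k*((i : ℤ)+1) = (r + 2*k) + 2*k*i by ring]
    linear_combination (-(g ((r + 2*k) + 2*k*i))) * hc
  rw [Finset.sum_congr rfl expand, ← Finset.mul_sum]
  have hz : ((0 : ℕ) : ℤ) * (((m+1).choose 0 : ℕ) : ℤ) * g (r + 2*k*((0:ℕ) : ℤ)) = 0 := by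
    norm_num
  rw [hz, add_zero, sumlem g Lk k hg m (r + 2*k)]
  ring

theorem statement2 (F L : ℤ → ℤ)
    (hF0 : F 0 = 0) (hF1 : F 1 = 1) (hF : ∀ n : ℤ, F n = F (n - 1) + F (n - 2))
    (hL0 : L 0 = 2) (hL1 : L 1 = 1) (hL : ∀ n : ℤ, L n = L (n - 1) + L (n - 2))
    (n : ℕ) (hn : 1 ≤ n) (k r : ℤ) (hk : Even k) :
    2 * ∑ j ∈ Finset.range (n + 1),
        (j : ℤ) * (n.choose j) * L (r + 2 * k * j) =
      5 * n * L k ^ (n - 1) * F (r + n * k) * F k + n * L k ^ n * L (r + n * k) ∧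
    2 * ∑ j ∈ Finset.range (n + 1),
        (j : ℤ) * (n.choose j) * F (r + 2 * k * j) =
      n * L k ^ (n - 1) * L (r + n * k) * F k + n * L k ^ n * F (r + n * k) := by
  obtain ⟨m, rfl⟩ : ∃ m, n = m + 1 := ⟨n - 1, (Nat.succ_pred_eq_of_pos hn).symm⟩
  obtain ⟨t, ht⟩ := hk
  have ES := evenshift F L hF0 hF1 hF hL0 hL1 hL t
  have hkey : ∀ a : ℤ, (F (a+k) + F (a-k) = F a * L k) ∧ (L (a+k) + L (a-k) = L a * L k) ∧
      (F (a+k) - F (a-k) = L a * F k) ∧ (L (a+k) - L (a-k) = 5 * F a * F k) := by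
    intro a
    have h := ES a
    rw [show a + 2*t = a + k by rw [ht]; ring, show a - 2*t = a - k by rw [ht]; ring,
      show 2*t = k by rw [ht]; ring] at h
    exact h
  have hgL : ∀ a : ℤ, L (a + k) + L (a - k) = L k * L a := by
    intro a; rw [mul_comm]; exact (hkey a).2.1
  have hgF : ∀ a : ℤ, F (a + k) + F (a - k) = L k * F a := by
    intro a; rw [mul_comm]; exact (hkey a).1
  have wL := wsum L (L k) k hgL m r
  have wF := wsum F (L k) k hgF m r
  have harg : (r + 2*k) + (m : ℤ)*k = (r + ((m:ℤ)+1)*k) + k := by ring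
  rw [harg] at wL wF
  have h1 := (hkey (r + ((m:ℤ)+1)*k)).2.1
  have h2 := (hkey (r + ((m:ℤ)+1)*k)).2.2.2
  have h3 := (hkey (r + ((m:ℤ)+1)*k)).1
  have h4 := (hkey (r + ((m:ℤ)+1)*k)).2.2.1
  constructor
  · rw [wL]
    simp only [Nat.add_sub_cancel]
    push_cast
    linear_combination ((m:ℤ)+1) * L k ^ m * (h1 + h2)
  · rw [wF]
    simp only [Nat.add_sub_cancel]
    push_cast
    linear_combination ((m:ℤ)+1) * L k ^ m * (h3 + h4)
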